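/- Let m ≥ 1, t₀ < T, let r : ℝ^m → ℝ^m and q : ℝ^m → (symmetric positive definite m×m matrices) be continuous, let h : ℝ^m → ℝ be continuous, and let Ū : [t₀,T] × ℝ^m → ℝ be continuously differentiable with ∂_s Ū(s,x) + ⟨r(x), ∇_x Ū(s,x)⟩ − (1/2)⟨∇_x Ū(s,x), q(x)·∇_x Ū(s,x)⟩ ≥ 0 on (t₀,T) × ℝ^m and Ū(T,x) ≤ h(x) for all x. Then for every continuously differentiable path φ : [t₀,T] → ℝ^m with φ(t₀) = x₀, Ū(t₀,x₀) ≤ ∫_{t₀}^T (1/2)⟨φ'(s) − r(φ(s)), q(φ(s))⁻¹(φ'(s) − r(φ(s)))⟩ ds + h(φ(T)). Consequently Ū(t₀,x₀) ≤ G(t₀,x₀), where G(t₀,x₀) is the infimum of the right-hand side over all such paths φ. -/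

import Mathlib

open Matrix

/-- The continuous linear map `w ↦ v ⬝ᵥ w` on `ℝ^m`, used to express the spatial
gradient of a function as a Fréchet derivative. -/
noncomputable def dotCLM {m : ℕ} (v : Fin m → ℝ) : (Fin m → ℝ) →L[ℝ] ℝ :=
  LinearMap.toContinuousLinearMap
    { toFun := fun w => v ⬝ᵥ w
      map_add' := fun w₁ w₂ => by simp [dotProduct_add]
      map_smul' := fun c w => by simp [dotProduct_smul] }

/-- Young-type inequality for a positive definite matrix:
`-(1/2)⟨b, q⁻¹ b⟩ ≤ (1/2)⟨p, q p⟩ + ⟨p, b⟩`. -/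
lemma key_ineq {m : ℕ} (q : Matrix (Fin m) (Fin m) ℝ) (hq : q.PosDef)
    (p b : Fin m → ℝ) :
    -((1/2) * (b ⬝ᵥ q⁻¹.mulVec b)) ≤ (1/2) * (p ⬝ᵥ q.mulVec p) + p ⬝ᵥ b := by
  have hdet : IsUnit q.det := isUnit_iff_ne_zero.2 hq.det_pos.ne'
  set c := p + q⁻¹.mulVec b with hc
  have h0 : 0 ≤ c ⬝ᵥ q.mulVec c := hq.posSemidef.dotProduct_mulVec_nonneg c
  have hqc : q.mulVec c = q.mulVec p + b := by
    rw [hc, Matrix.mulVec_add, Matrix.mulVec_mulVec, Matrix.mul_nonsing_inv q hdet,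
      Matrix.one_mulVec]
  have hsym : ∀ x y : Fin m → ℝ, x ⬝ᵥ q.mulVec y = y ⬝ᵥ q.mulVec x := by
    intro x y
    rw [Matrix.dotProduct_mulVec, ← Matrix.mulVec_transpose]
    rw [show qᵀ = q from ?_, dotProduct_comm]
    · have := hq.1
      simpa [Matrix.IsHermitian] using this
  have hexp : c ⬝ᵥ q.mulVec c
      = p ⬝ᵥ q.mulVec p + 2 * (p ⬝ᵥ b) + b ⬝ᵥ q⁻¹.mulVec b := by
    rw [hqc, hc]
    rw [add_dotProduct, dotProduct_add, dotProduct_add]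
    have h1 : q⁻¹.mulVec b ⬝ᵥ q.mulVec p = p ⬝ᵥ b := by
      rw [hsym, Matrix.mulVec_mulVec, Matrix.mul_nonsing_inv q hdet, Matrix.one_mulVec]
    have h2 : q⁻¹.mulVec b ⬝ᵥ b = b ⬝ᵥ q⁻¹.mulVec b := dotProduct_comm _ _
    rw [h1, h2]
    ring
  nlinarith [h0, hexp]

lemma cont_dot {m : ℕ} {α : Type*} [TopologicalSpace α] (f g : α → Fin m → ℝ)
    (hf : Continuous f) (hg : Continuous g) :
    Continuous fun s => f s ⬝ᵥ g s := by
  unfold dotProduct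
  exact continuous_finset_sum _ fun i _ =>
    ((continuous_apply i).comp hf).mul ((continuous_apply i).comp hg)

lemma cont_mulVec {m : ℕ} {α : Type*} [TopologicalSpace α]
    (A : α → Matrix (Fin m) (Fin m) ℝ) (f : α → Fin m → ℝ)
    (hA : Continuous A) (hf : Continuous f) : Continuous fun s => (A s).mulVec (f s) := by
  apply continuous_pi
  intro i
  exact cont_dot (fun s => A s i) f (continuous_pi fun j => ((continuous_apply j).comp
    ((continuous_apply i).comp hA))) hf

/-- Any classical `C¹` subsolution `Ū` of the homogenized HJB equation with terminal
condition `Ū(T,·) ≤ h` is bounded above along every `C¹` path by the running cost plus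
terminal cost, and hence is bounded above by the value function
`G(t₀,x₀) = inf_φ { ∫_{t₀}^T (1/2)⟨φ'−r(φ), q(φ)⁻¹(φ'−r(φ))⟩ ds + h(φ(T)) }`. -/
theorem subsolution_le_value_function {m : ℕ} (hm : 1 ≤ m) (t₀ T : ℝ) (ht : t₀ < T)
    (r : (Fin m → ℝ) → (Fin m → ℝ)) (q : (Fin m → ℝ) → Matrix (Fin m) (Fin m) ℝ)
    (hr : Continuous r) (hqc : Continuous q) (hqpd : ∀ x, (q x).PosDef)
    (h : (Fin m → ℝ) → ℝ) (hh : Continuous h)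
    (U Ut : ℝ → (Fin m → ℝ) → ℝ) (Ux : ℝ → (Fin m → ℝ) → (Fin m → ℝ))
    (hU : ContDiff ℝ 1 (Function.uncurry U))
    (hUt : ∀ s x, HasDerivAt (fun t => U t x) (Ut s x) s)
    (hUx : ∀ s x, HasFDerivAt (fun y => U s y) (dotCLM (Ux s x)) x)
    (hsub : ∀ s ∈ Set.Ioo t₀ T, ∀ x,
      0 ≤ Ut s x + r x ⬝ᵥ Ux s x - (1 / 2) * (Ux s x ⬝ᵥ (q x).mulVec (Ux s x)))
    (hterm : ∀ x, U T x ≤ h x)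
    (x₀ : Fin m → ℝ) :
    (∀ φ φ' : ℝ → Fin m → ℝ, ContDiff ℝ 1 φ → (∀ s, HasDerivAt φ (φ' s) s) →
      φ t₀ = x₀ →
      U t₀ x₀ ≤
        (∫ s in t₀..T,
          (1 / 2) * ((φ' s - r (φ s)) ⬝ᵥ (q (φ s))⁻¹.mulVec (φ' s - r (φ s))))
          + h (φ T))
    ∧ U t₀ x₀ ≤
        sInf { y : ℝ | ∃ φ φ' : ℝ → Fin m → ℝ, ContDiff ℝ 1 φ ∧
          (∀ s, HasDerivAt φ (φ' s) s) ∧ φ t₀ = x₀ ∧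
          y = (∫ s in t₀..T,
                (1 / 2) * ((φ' s - r (φ s)) ⬝ᵥ (q (φ s))⁻¹.mulVec (φ' s - r (φ s))))
                + h (φ T) } := by
  -- continuity of x ↦ (q x)⁻¹
  have hqinv : Continuous (fun x => (q x)⁻¹) := by
    have : (fun x => (q x)⁻¹) = fun x => ((q x).det)⁻¹ • (q x).adjugate := by
      funext x
      rw [Matrix.inv_def, Ring.inverse_eq_inv]
    rw [this]
    exact (hqc.matrix_det.inv₀ (fun x => (hqpd x).det_pos.ne')).smul hqc.matrix_adjugate
  have main : ∀ φ φ' : ℝ → Fin m → ℝ, ContDiff ℝ 1 φ → (∀ s, HasDerivAt φ (φ' s) s) →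
      φ t₀ = x₀ →
      U t₀ x₀ ≤
        (∫ s in t₀..T,
          (1 / 2) * ((φ' s - r (φ s)) ⬝ᵥ (q (φ s))⁻¹.mulVec (φ' s - r (φ s))))
          + h (φ T) := by
    intro φ φ' hφ hφ' hφ0
    -- the running cost
    set L : ℝ → ℝ := fun s =>
      (1 / 2) * ((φ' s - r (φ s)) ⬝ᵥ (q (φ s))⁻¹.mulVec (φ' s - r (φ s))) with hLdef
    -- φ' is continuous
    have hφ'c : Continuous φ' := by
      have : φ' = deriv φ := funext fun s => ((hφ' s).deriv).symm
      rw [this]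
      exact hφ.continuous_deriv le_rfl
    have hφc : Continuous φ := hφ.continuous
    have hLc : Continuous L := by
      apply continuous_const.mul
      exact cont_dot _ _ (hφ'c.sub (hr.comp hφc))
        (cont_mulVec _ _ (hqinv.comp hφc) (hφ'c.sub (hr.comp hφc)))
    -- derivative of s ↦ U s (φ s)
    set g' : ℝ → ℝ := fun s => Ut s (φ s) + Ux s (φ s) ⬝ᵥ φ' s with hg'def
    have hUF : ∀ s, HasFDerivAt (Function.uncurry U)
        (fderiv ℝ (Function.uncurry U) (s, φ s)) (s, φ s) :=
      fun s => (hU.differentiable one_ne_zero (s, φ s)).hasFDerivAt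
    have hsplit : ∀ s, fderiv ℝ (Function.uncurry U) (s, φ s) (1, φ' s) = g' s := by
      intro s
      set D := fderiv ℝ (Function.uncurry U) (s, φ s) with hD
      have h1 : D (1, (0 : Fin m → ℝ)) = Ut s (φ s) := by
        have hcomp : HasDerivAt (fun t => U t (φ s)) (D (1, 0)) s := by
          have : HasDerivAt (fun t : ℝ => (t, φ s)) ((1 : ℝ), (0 : Fin m → ℝ)) s :=
            (hasDerivAt_id s).prodMk (hasDerivAt_const s (φ s))
          exact (hUF s).comp_hasDerivAt s this
        exact hcomp.unique (hUt s (φ s))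
      have h2 : D (0, φ' s) = Ux s (φ s) ⬝ᵥ φ' s := by
        have hcomp : HasFDerivAt (fun y => U s y)
            (D.comp (ContinuousLinearMap.inr ℝ ℝ (Fin m → ℝ))) (φ s) := by
          have hin : HasFDerivAt (fun y : Fin m → ℝ => ((s : ℝ), y))
              (ContinuousLinearMap.inr ℝ ℝ (Fin m → ℝ)) (φ s) :=
            (hasFDerivAt_const s _).prodMk (hasFDerivAt_id _)
          exact (hUF s).comp (φ s) hin
        have heq := hcomp.unique (hUx s (φ s))
        calc D (0, φ' s) = (D.comp (ContinuousLinearMap.inr ℝ ℝ (Fin m → ℝ))) (φ' s) := rfl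
          _ = dotCLM (Ux s (φ s)) (φ' s) := by rw [heq]
          _ = Ux s (φ s) ⬝ᵥ φ' s := rfl
      show D (1, φ' s) = Ut s (φ s) + Ux s (φ s) ⬝ᵥ φ' s
      rw [← h1, ← h2, ← map_add]
      norm_num
    have hgderiv : ∀ s, HasDerivAt (fun t => U t (φ t)) (g' s) s := by
      intro s
      have hpath : HasDerivAt (fun t => (t, φ t)) ((1 : ℝ), φ' s) s :=
        (hasDerivAt_id s).prodMk (hφ' s)
      have := (hUF s).comp_hasDerivAt s hpath
      rwa [hsplit s] at this
    -- continuity of g'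
    have hg'c : Continuous g' := by
      have heq : g' = fun s => fderiv ℝ (Function.uncurry U) (s, φ s) (1, φ' s) :=
        funext fun s => (hsplit s).symm
      rw [heq]
      exact ((hU.continuous_fderiv one_ne_zero).comp
        (continuous_id.prodMk hφc)).clm_apply (continuous_const.prodMk hφ'c)
    -- FTC
    have hFTC : (∫ s in t₀..T, g' s) = U T (φ T) - U t₀ (φ t₀) :=
      intervalIntegral.integral_eq_sub_of_hasDerivAt
        (fun s _ => hgderiv s) (hg'c.intervalIntegrable t₀ T)
    -- pointwise bound on the open interval
    have hpt : ∀ s ∈ Set.Ioo t₀ T, -L s ≤ g' s := by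
      intro s hs
      have hsb := hsub s hs (φ s)
      have hkey := key_ineq (q (φ s)) (hqpd (φ s)) (Ux s (φ s)) (φ' s - r (φ s))
      have hlin : Ux s (φ s) ⬝ᵥ (φ' s - r (φ s))
          = Ux s (φ s) ⬝ᵥ φ' s - Ux s (φ s) ⬝ᵥ r (φ s) := by
        rw [dotProduct_sub]
      have hcomm : r (φ s) ⬝ᵥ Ux s (φ s) = Ux s (φ s) ⬝ᵥ r (φ s) :=
        dotProduct_comm _ _
      simp only [hLdef, hg'def]
      rw [hcomm] at hsb
      rw [hlin] at hkey
      linarith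
    -- integral comparison
    have hae : (fun s => -L s) ≤ᵐ[MeasureTheory.volume.restrict (Set.Icc t₀ T)] g' := by
      have hres : MeasureTheory.volume.restrict (Set.Icc t₀ T)
          = MeasureTheory.volume.restrict (Set.Ioo t₀ T) :=
        (MeasureTheory.Measure.restrict_congr_set MeasureTheory.Ioo_ae_eq_Icc).symm
      rw [hres]
      filter_upwards [MeasureTheory.ae_restrict_mem measurableSet_Ioo] with s hs
      exact hpt s hs
    have hint : (∫ s in t₀..T, -L s) ≤ ∫ s in t₀..T, g' s :=
      intervalIntegral.integral_mono_ae_restrict ht.le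
        ((hLc.neg).intervalIntegrable t₀ T) (hg'c.intervalIntegrable t₀ T) hae
    rw [intervalIntegral.integral_neg, hFTC, hφ0] at hint
    have := hterm (φ T)
    linarith
  refine ⟨main, ?_⟩
  apply le_csInf
  · refine ⟨(∫ s in t₀..T,
        (1 / 2) * (((fun _ => (0 : Fin m → ℝ)) s - r x₀) ⬝ᵥ
          (q x₀)⁻¹.mulVec ((fun _ => (0 : Fin m → ℝ)) s - r x₀))) + h x₀,
      fun _ => x₀, fun _ => 0, contDiff_const, fun s => hasDerivAt_const s x₀, rfl, rfl⟩
  · rintro y ⟨φ, φ', hφ, hφ', hφ0, rfl⟩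
    exact main φ φ' hφ hφ' hφ0
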